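/- Suppose each successful party removed from the system contributes at most B to future contention at any fixed time, at most μ·δ parties succeed within each full earlier block of length δ, and the contribution of a party that succeeded at time t_succ to contention at time t ≥ t_succ is at most B_β(max(t − t_succ, m)) where B_β(x) = (ln x)^β/x for x ≥ m ≥ e^β. Then the total contention removed at time t by all parties that succeeded before t is at most 3Bδ + μ·(ln t)^{β+1}/(β+1). -/

import Mathlib

open Real Finset

lemma fB_anti {β : ℝ} (hβ : 0 ≤ β) :
    AntitoneOn (fun x => Real.log x ^ β / x) (Set.Ici (Real.exp β)) := by
  have hepos := Real.exp_pos β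
  apply antitoneOn_of_deriv_nonpos (convex_Ici _)
  · intro x hx
    have hx0 : 0 < x := lt_of_lt_of_le hepos hx
    exact (((Real.continuousAt_log hx0.ne').rpow_const (Or.inr hβ)).div
      continuousAt_id hx0.ne').continuousWithinAt
  · rw [interior_Ici]
    intro x hx
    have hx0 : 0 < x := lt_trans hepos hx
    have hlog : β < Real.log x := by
      rw [← Real.log_exp β]
      exact Real.log_lt_log hepos hx
    have hlog0 : 0 < Real.log x := lt_of_le_of_lt hβ hlog
    have h1 : HasDerivAt (fun x => Real.log x ^ β) (x⁻¹ * β * Real.log x ^ (β - 1)) x :=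
      (Real.hasDerivAt_log hx0.ne').rpow_const (Or.inl hlog0.ne')
    have h2 : HasDerivAt (fun x => Real.log x ^ β / x)
        ((x⁻¹ * β * Real.log x ^ (β - 1) * x - Real.log x ^ β * 1) / x ^ 2) x := by
      exact h1.div (hasDerivAt_id' x) hx0.ne'
    exact h2.differentiableAt.differentiableWithinAt
  · rw [interior_Ici]
    intro x hx
    have hx0 : 0 < x := lt_trans hepos hx
    have hlog : β < Real.log x := by
      rw [← Real.log_exp β]
      exact Real.log_lt_log hepos hx
    have hlog0 : 0 < Real.log x := lt_of_le_of_lt hβ hlog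
    have h1 : HasDerivAt (fun x => Real.log x ^ β) (x⁻¹ * β * Real.log x ^ (β - 1)) x :=
      (Real.hasDerivAt_log hx0.ne').rpow_const (Or.inl hlog0.ne')
    have h2 : HasDerivAt (fun x => Real.log x ^ β / x)
        ((x⁻¹ * β * Real.log x ^ (β - 1) * x - Real.log x ^ β * 1) / x ^ 2) x := by
      exact h1.div (hasDerivAt_id' x) hx0.ne'
    rw [h2.deriv]
    have hsplit : Real.log x ^ β = Real.log x ^ (β - 1) * Real.log x := by
      rw [← Real.rpow_add_one hlog0.ne' (β - 1)]
      ring_nf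
    have hnum : x⁻¹ * β * Real.log x ^ (β - 1) * x - Real.log x ^ β * 1 =
        Real.log x ^ (β - 1) * (β - Real.log x) := by
      field_simp
      rw [hsplit]; ring
    rw [hnum]
    apply div_nonpos_of_nonpos_of_nonneg
    · apply mul_nonpos_of_nonneg_of_nonpos
      · exact Real.rpow_nonneg hlog0.le _
      · linarith
    · positivity

lemma FB_hasDeriv {β : ℝ} (hβ : 0 ≤ β) {x : ℝ} (hx0 : 0 < x) :
    HasDerivAt (fun x => Real.log x ^ (β + 1) / (β + 1)) (Real.log x ^ β / x) x := by
  have h1 : HasDerivAt (fun x => Real.log x ^ (β + 1))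
      (x⁻¹ * (β + 1) * Real.log x ^ (β + 1 - 1)) x :=
    (Real.hasDerivAt_log hx0.ne').rpow_const (Or.inr (by linarith))
  have h2 := h1.div_const (β + 1)
  refine h2.congr_deriv ?_
  have : β + 1 - 1 = β := by ring
  rw [this]
  field_simp

lemma FB_mvt {β : ℝ} (hβ : 0 ≤ β) {a b : ℝ} (ha : Real.exp β ≤ a) (hab : a < b) :
    (b - a) * (Real.log b ^ β / b) ≤
      Real.log b ^ (β + 1) / (β + 1) - Real.log a ^ (β + 1) / (β + 1) := by
  have hepos := Real.exp_pos β
  have ha0 : 0 < a := lt_of_lt_of_le hepos ha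
  have hcont : ContinuousOn (fun x => Real.log x ^ (β + 1) / (β + 1)) (Set.Icc a b) := by
    intro x hx
    have hx0 : 0 < x := lt_of_lt_of_le ha0 hx.1
    exact (((Real.continuousAt_log hx0.ne').rpow_const (Or.inr (by linarith))).div_const
      _).continuousWithinAt
  obtain ⟨c, hc, hceq⟩ := exists_hasDerivAt_eq_slope
    (fun x => Real.log x ^ (β + 1) / (β + 1)) (fun x => Real.log x ^ β / x) hab hcont
    (fun x hx => FB_hasDeriv hβ (by have := hx.1; linarith))
  · have hfcb : Real.log b ^ β / b ≤ Real.log c ^ β / c :=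
      fB_anti hβ (Set.mem_Ici.mpr (ha.trans hc.1.le)) (Set.mem_Ici.mpr (ha.trans hab.le))
        hc.2.le
    have hba : 0 < b - a := by linarith
    rw [eq_div_iff (by linarith : b - a ≠ 0)] at hceq
    nlinarith

lemma FB_mono {β : ℝ} (hβ : 0 ≤ β) {x y : ℝ} (hx : 1 ≤ x) (hxy : x ≤ y) :
    Real.log x ^ (β + 1) / (β + 1) ≤ Real.log y ^ (β + 1) / (β + 1) := by
  have h : Real.log x ≤ Real.log y := Real.log_le_log (by linarith) hxy
  have h2 := Real.rpow_le_rpow (Real.log_nonneg hx) h (by linarith : (0:ℝ) ≤ β + 1)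
  rw [div_eq_mul_inv, div_eq_mul_inv]
  exact mul_le_mul_of_nonneg_right h2 (by positivity)

theorem stmt16 (β μ m : ℝ) (δ t : ℕ) (P : Finset ℕ) (tsucc : ℕ → ℕ) (contrib : ℕ → ℝ)
    (hβ : 0 ≤ β) (hμ : 0 ≤ μ)
    (hm : Real.exp β ≤ m) (hδ : Real.exp β ≤ (δ : ℝ)) (hδ1 : 1 ≤ δ)
    (hst : ∀ u ∈ P, tsucc u < t)
    (hinj : Set.InjOn tsucc P)
    (hdens : ∀ i : ℕ,
      ((P.filter (fun u => i * δ ≤ tsucc u ∧ tsucc u < (i + 1) * δ)).card : ℝ) ≤ μ * δ)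
    (hc0 : ∀ u ∈ P, 0 ≤ contrib u)
    (hc : ∀ u ∈ P, contrib u ≤
      Real.log (max ((t : ℝ) - (tsucc u : ℝ)) m) ^ β / max ((t : ℝ) - (tsucc u : ℝ)) m) :
    (∑ u ∈ P, contrib u)
      ≤ 3 * (Real.log m ^ β / m) * δ + μ * Real.log t ^ (β + 1) / (β + 1) := by
  have hepos := Real.exp_pos β
  have he1 : (1:ℝ) ≤ Real.exp β := Real.one_le_exp hβ
  have hm0 : 0 < m := lt_of_lt_of_le hepos hm
  have hδ0 : (1:ℝ) ≤ (δ:ℝ) := le_trans he1 hδ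
  have hβ1 : (0:ℝ) < β + 1 := by linarith
  have hlogm : 0 ≤ Real.log m := Real.log_nonneg (le_trans he1 hm)
  have hB : 0 ≤ Real.log m ^ β / m := div_nonneg (Real.rpow_nonneg hlogm _) hm0.le
  have hlogt : 0 ≤ Real.log (t:ℝ) := by
    rcases Nat.eq_zero_or_pos t with h | h
    · simp [h]
    · exact Real.log_nonneg (by exact_mod_cast h)
  rw [← Finset.sum_filter_add_sum_filter_not P (fun u => tsucc u + 3*δ < t)]
  have h1 : ∑ u ∈ P.filter (fun u => ¬ (tsucc u + 3*δ < t)), contrib u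
      ≤ 3 * (Real.log m ^ β / m) * δ := by
    set P1 := P.filter (fun u => ¬ (tsucc u + 3*δ < t)) with hP1
    have hcard : P1.card ≤ 3*δ := by
      have hmaps : ∀ u ∈ P1, tsucc u ∈ Finset.Ico (t - 3*δ) t := by
        intro u hu
        rw [hP1, Finset.mem_filter] at hu
        have := hst u hu.1
        rw [Finset.mem_Ico]
        omega
      calc P1.card ≤ (Finset.Ico (t - 3*δ) t).card :=
            Finset.card_le_card_of_injOn tsucc hmaps
              (hinj.mono (fun u hu => (Finset.mem_filter.mp hu).1))
        _ = t - (t - 3*δ) := Nat.card_Ico _ _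
        _ ≤ 3*δ := by omega
    have hcb : ∀ u ∈ P1, contrib u ≤ Real.log m ^ β / m := by
      intro u hu
      rw [hP1, Finset.mem_filter] at hu
      refine (hc u hu.1).trans ?_
      exact fB_anti hβ (Set.mem_Ici.mpr hm)
        (Set.mem_Ici.mpr (le_trans hm (le_max_right _ _))) (le_max_right _ _)
    calc ∑ u ∈ P1, contrib u ≤ P1.card • (Real.log m ^ β / m) :=
          Finset.sum_le_card_nsmul _ _ _ hcb
      _ = (P1.card : ℝ) * (Real.log m ^ β / m) := nsmul_eq_mul _ _
      _ ≤ ((3*δ : ℕ) : ℝ) * (Real.log m ^ β / m) := by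
          exact mul_le_mul_of_nonneg_right (by exact_mod_cast hcard) hB
      _ = 3 * (Real.log m ^ β / m) * δ := by push_cast; ring
  have h2 : ∑ u ∈ P.filter (fun u => tsucc u + 3*δ < t), contrib u
      ≤ μ * Real.log t ^ (β + 1) / (β + 1) := by
    by_cases hbig : 3*δ < t
    swap
    · have : P.filter (fun u => tsucc u + 3*δ < t) = ∅ := by
        apply Finset.filter_false_of_mem
        intro u _
        omega
      rw [this, Finset.sum_empty]
      have : 0 ≤ Real.log (t:ℝ) ^ (β+1) := Real.rpow_nonneg hlogt _
      positivity
    · set P2 := P.filter (fun u => tsucc u + 3*δ < t) with hP2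
      set G : ℕ → ℝ := fun j => Real.log (max ((t:ℝ) - ((j:ℝ)+1)*(δ:ℝ)) (δ:ℝ)) ^ (β+1) / (β+1)
        with hG
      have hmax1 : ∀ j : ℕ, (1:ℝ) ≤ max ((t:ℝ) - ((j:ℝ)+1)*(δ:ℝ)) (δ:ℝ) :=
        fun j => le_trans hδ0 (le_max_right _ _)
      have hGanti : ∀ j : ℕ, G (j+1) ≤ G j := by
        intro j
        apply FB_mono hβ (hmax1 (j+1))
        apply max_le_max _ le_rfl
        push_cast
        nlinarith [hδ0]
      have hGnonneg : ∀ j : ℕ, 0 ≤ G j := fun j =>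
        div_nonneg (Real.rpow_nonneg (Real.log_nonneg (hmax1 j)) _) hβ1.le
      have key : ∀ j ∈ Finset.range t,
          ∑ u ∈ P2.filter (fun u => tsucc u / δ = j), contrib u ≤ μ * (G j - G (j+1)) := by
        intro j hj
        set Qj := P2.filter (fun u => tsucc u / δ = j) with hQj
        rcases Finset.eq_empty_or_nonempty Qj with hemp | ⟨u0, hu0⟩
        · rw [hemp, Finset.sum_empty]
          have := hGanti j
          exact mul_nonneg hμ (by linarith)
        · rw [hQj, hP2, Finset.filter_filter, Finset.mem_filter] at hu0
          obtain ⟨hu0P, hu0t, hu0j⟩ := hu0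
          have hblock : ∀ u ∈ Qj, j*δ ≤ tsucc u ∧ tsucc u < (j+1)*δ := by
            intro u hu
            rw [hQj, hP2, Finset.filter_filter, Finset.mem_filter] at hu
            obtain ⟨_, _, hj'⟩ := hu
            constructor
            · rw [← hj']; exact Nat.div_mul_le_self _ _
            · have hmod := Nat.mod_lt (tsucc u) (show 0 < δ by omega)
              have hdm := Nat.div_add_mod (tsucc u) δ
              calc tsucc u = δ * (tsucc u / δ) + tsucc u % δ := hdm.symm
                _ < δ * j + δ := by rw [hj']; omega
                _ = (j+1)*δ := by ring
          have hjd : j*δ + 3*δ < t := by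
            have h1 : j*δ ≤ tsucc u0 := by
              rw [← hu0j]; exact Nat.div_mul_le_self _ _
            omega
          have hjdR : (j:ℝ)*(δ:ℝ) + 3*(δ:ℝ) + 1 ≤ (t:ℝ) := by exact_mod_cast hjd
          obtain ⟨b, hb⟩ : ∃ b : ℝ, b = (t:ℝ) - ((j:ℝ)+1)*(δ:ℝ) := ⟨_, rfl⟩
          have hbge : 2*(δ:ℝ) < b := by rw [hb]; nlinarith
          obtain ⟨a, ha⟩ : ∃ a : ℝ, a = (t:ℝ) - ((j:ℝ)+2)*(δ:ℝ) := ⟨_, rfl⟩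
          have hage : (δ:ℝ) < a := by rw [ha]; nlinarith
          have hab : a < b := by rw [ha, hb]; nlinarith [hδ0]
          have haexp : Real.exp β ≤ a := le_trans hδ hage.le
          have hbexp : Real.exp β ≤ b := le_trans haexp hab.le
          have hmaxb : max ((t:ℝ) - ((j:ℝ)+1)*(δ:ℝ)) (δ:ℝ) = b := by
            rw [hb]
            refine max_eq_left ?_
            rw [hb] at hbge
            linarith
          have hGj : G j = Real.log b ^ (β+1) / (β+1) := by
            simp only [hG]
            rw [hmaxb]
          have hGj1 : G (j+1) = Real.log a ^ (β+1) / (β+1) := by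
            simp only [hG]
            have hcast : ((((j:ℕ)+1 : ℕ)):ℝ) + 1 = (j:ℝ) + 2 := by push_cast; ring
            rw [hcast, ← ha]
            have hm' : max a (δ:ℝ) = a := max_eq_left (by linarith)
            rw [hm']
          have hcard : (Qj.card : ℝ) ≤ μ * δ := by
            refine le_trans ?_ (hdens j)
            have hsub : Qj ⊆ P.filter (fun u => j * δ ≤ tsucc u ∧ tsucc u < (j + 1) * δ) := by
              intro u hu
              have := hblock u hu
              rw [hQj, hP2, Finset.filter_filter, Finset.mem_filter] at hu
              rw [Finset.mem_filter]
              exact ⟨hu.1, this⟩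
            exact_mod_cast Finset.card_le_card hsub
          have hb1 : (1:ℝ) ≤ b := by linarith
          have hfb0 : 0 ≤ Real.log b ^ β / b :=
            div_nonneg (Real.rpow_nonneg (Real.log_nonneg hb1) _) (by linarith)
          have hcb : ∀ u ∈ Qj, contrib u ≤ Real.log b ^ β / b := by
            intro u hu
            have hblk := hblock u hu
            rw [hQj, hP2, Finset.filter_filter, Finset.mem_filter] at hu
            refine (hc u hu.1).trans ?_
            have htu : (tsucc u : ℝ) < ((j:ℝ)+1)*(δ:ℝ) := by
              exact_mod_cast hblk.2
            have hble : b ≤ max ((t : ℝ) - (tsucc u : ℝ)) m := by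
              refine le_trans ?_ (le_max_left _ _)
              rw [hb]; linarith
            exact fB_anti hβ (Set.mem_Ici.mpr hbexp)
              (Set.mem_Ici.mpr (le_trans hbexp hble)) hble
          calc ∑ u ∈ Qj, contrib u ≤ Qj.card • (Real.log b ^ β / b) :=
                Finset.sum_le_card_nsmul _ _ _ hcb
            _ = (Qj.card : ℝ) * (Real.log b ^ β / b) := nsmul_eq_mul _ _
            _ ≤ (μ * δ) * (Real.log b ^ β / b) := mul_le_mul_of_nonneg_right hcard hfb0
            _ = μ * ((b - a) * (Real.log b ^ β / b)) := by
                have : b - a = (δ:ℝ) := by rw [hb, ha]; ring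
                rw [this]; ring
            _ ≤ μ * (Real.log b ^ (β+1)/(β+1) - Real.log a ^ (β+1)/(β+1)) :=
                mul_le_mul_of_nonneg_left (FB_mvt hβ haexp hab) hμ
            _ = μ * (G j - G (j+1)) := by rw [hGj, hGj1]
      calc ∑ u ∈ P2, contrib u
          = ∑ j ∈ Finset.range t, ∑ u ∈ P2.filter (fun u => tsucc u / δ = j), contrib u := by
            refine (Finset.sum_fiberwise_of_maps_to ?_ _).symm
            intro u hu
            rw [hP2, Finset.mem_filter] at hu
            have := hst u hu.1
            have := Nat.div_le_self (tsucc u) δ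
            rw [Finset.mem_range]
            omega
        _ ≤ ∑ j ∈ Finset.range t, μ * (G j - G (j+1)) := Finset.sum_le_sum key
        _ = μ * (G 0 - G t) := by rw [← Finset.mul_sum, Finset.sum_range_sub' G]
        _ ≤ μ * (Real.log t ^ (β+1) / (β+1)) := by
            have h0 : G 0 ≤ Real.log t ^ (β+1) / (β+1) := by
              apply FB_mono hβ (hmax1 0)
              apply max_le
              · nlinarith [hδ0]
              · have : (3:ℝ)*(δ:ℝ) < (t:ℝ) := by exact_mod_cast hbig
                linarith
            have h1 := hGnonneg t
            nlinarith
        _ = μ * Real.log t ^ (β+1) / (β+1) := by ring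
  linarith
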